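/- Let B be the symmetric bilinear form on ℤ³ given in the standard basis e₁, e₂, e₃ by the Gram matrix with rows (−2, 1, 0), (1, −2, 1), (0, 1, −3). Then B is nondegenerate, the vector v = (1/7)(e₁ + 2e₂ + 3e₃) ∈ ℚ³ lies in the dual lattice (i.e. B_ℚ(v, eᵢ) ∈ ℤ for i = 1,2,3), B_ℚ(v, v) = −3/7, and the discriminant group disc(ℤ³, B) is cyclic of order 7, generated by the class of v. -/

import Mathlib

open TensorProduct

noncomputable section

/-- The natural map `N → ℚ ⊗[ℤ] N`, `x ↦ 1 ⊗ x`. -/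
def toQ (N : Type) [AddCommGroup N] : N →ₗ[ℤ] ℚ ⊗[ℤ] N :=
  TensorProduct.mk ℤ ℚ N 1

/-- The dual lattice `N* = {x ∈ N ⊗ ℚ : B_ℚ(x,y) ∈ ℤ for all y ∈ N}`. -/
def dualLattice {N : Type} [AddCommGroup N]
    (B : LinearMap.BilinForm ℤ N) : Submodule ℤ (ℚ ⊗[ℤ] N) where
  carrier := {x | ∀ y : N, ∃ n : ℤ, B.baseChange ℚ x (toQ N y) = n}
  zero_mem' := fun y => ⟨0, by simp⟩
  add_mem' := by
    intro x x' hx hx' y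
    obtain ⟨n, hn⟩ := hx y
    obtain ⟨n', hn'⟩ := hx' y
    exact ⟨n + n', by rw [map_add, LinearMap.add_apply, hn, hn']; push_cast; ring⟩
  smul_mem' := by
    intro c x hx y
    obtain ⟨n, hn⟩ := hx y
    refine ⟨c * n, ?_⟩
    rw [← Int.cast_smul_eq_zsmul ℚ c x, map_smul, LinearMap.smul_apply, hn,
      smul_eq_mul]
    push_cast; ring

/-- `disc(N) = N*/N`, the discriminant group of a lattice. -/
abbrev disc {N : Type} [AddCommGroup N] (B : LinearMap.BilinForm ℤ N) :=
  (dualLattice B) ⧸ ((LinearMap.range (toQ N)).comap (dualLattice B).subtype)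

/-- The saturation (primitive closure) `S̄ = {x ∈ L : n • x ∈ S for some n ≥ 1}`. -/
def saturation {L : Type} [AddCommGroup L] (S : Submodule ℤ L) :
    Submodule ℤ L where
  carrier := {x | ∃ n : ℤ, 1 ≤ n ∧ n • x ∈ S}
  zero_mem' := ⟨1, le_refl 1, by simp⟩
  add_mem' := by
    rintro x y ⟨n, hn, hnx⟩ ⟨m, hm, hmy⟩
    refine ⟨n * m, one_le_mul_of_one_le_of_one_le hn hm, ?_⟩
    have : (n * m) • (x + y) = m • (n • x) + n • (m • y) := by
      rw [smul_add, mul_comm n m, mul_smul, mul_comm m n, mul_smul]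
    rw [this]
    exact S.add_mem (S.smul_mem m hnx) (S.smul_mem n hmy)
  smul_mem' := by
    rintro c x ⟨n, hn, hnx⟩
    refine ⟨n, hn, ?_⟩
    rw [smul_comm]
    exact S.smul_mem c hnx

/-- The orthogonal complement `S⊥ = {x ∈ L : B(x,s) = 0 for all s ∈ S}`. -/
def orthComp {L : Type} [AddCommGroup L] (B : LinearMap.BilinForm ℤ L)
    (S : Submodule ℤ L) : Submodule ℤ L where
  carrier := {x | ∀ s ∈ S, B x s = 0}
  zero_mem' := fun s _ => by simp
  add_mem' := fun hx hy s hs => by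
    rw [map_add, LinearMap.add_apply, hx s hs, hy s hs, add_zero]
  smul_mem' := fun c x hx s hs => by
    rw [map_smul, LinearMap.smul_apply, hx s hs, smul_zero]

/-- The Gram matrix of the chain of curves `A₁, A₂, E₁` (a `(-2)`-curve, a
`(-2)`-curve and a `(-3)`-curve, consecutive ones meeting once). -/
def gram3 : Matrix (Fin 3) (Fin 3) ℤ := !![-2, 1, 0; 1, -2, 1; 0, 1, -3]

/-- The bilinear form on `ℤ³` with Gram matrix `gram3`. -/
noncomputable def bform3 : LinearMap.BilinForm ℤ (Fin 3 → ℤ) :=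
  Matrix.toLinearMap₂' ℤ gram3

/-- The vector `v = (1/7)(e₁ + 2e₂ + 3e₃)` in `ℚ³ = ℚ ⊗ ℤ³`. -/
noncomputable def vec3 : ℚ ⊗[ℤ] (Fin 3 → ℤ) :=
  ((1 : ℚ) / 7) • toQ (Fin 3 → ℤ) ![1, 2, 3]


noncomputable def bE : Module.Basis (Fin 3) ℚ (ℚ ⊗[ℤ] (Fin 3 → ℤ)) :=
  (Pi.basisFun ℤ (Fin 3)).baseChange ℚ

lemma toQ_eq (y : Fin 3 → ℤ) :
    toQ (Fin 3 → ℤ) y = bE.equivFun.symm (fun i => (y i : ℚ)) := by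
  apply bE.repr.injective
  ext i
  change bE.repr ((1:ℚ) ⊗ₜ y) i = _
  simp [toQ, bE, TensorProduct.mk_apply, Pi.basisFun_repr, Module.Basis.equivFun_symm_apply,
    Pi.single_apply]

lemma bform3_single (i j : Fin 3) :
    bform3 (Pi.single i 1) (Pi.single j 1) = gram3 i j := by
  simp [bform3, Matrix.toLinearMap₂'_apply, Pi.single_apply, Finset.sum_ite_eq]

lemma bq_apply (c d : Fin 3 → ℚ) :
    bform3.baseChange ℚ (bE.equivFun.symm c) (bE.equivFun.symm d)
      = ∑ i, ∑ j, c i * (gram3 i j : ℚ) * d j := by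
  rw [Module.Basis.equivFun_symm_apply, Module.Basis.equivFun_symm_apply]
  simp only [map_sum, map_smul, LinearMap.sum_apply, LinearMap.smul_apply, smul_eq_mul,
    bE, Module.Basis.baseChange_apply, Pi.basisFun_apply, LinearMap.BilinForm.baseChange_tmul,
    bform3_single, mul_one, zsmul_eq_mul]
  rw [Finset.sum_comm]
  apply Finset.sum_congr rfl; intro i _
  rw [Finset.mul_sum]
  apply Finset.sum_congr rfl; intro j _
  ring

lemma bq_toQ (c : Fin 3 → ℚ) (y : Fin 3 → ℤ) :
    bform3.baseChange ℚ (bE.equivFun.symm c) (toQ (Fin 3 → ℤ) y) =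
      c 0 * (-2 * y 0 + y 1) + c 1 * (y 0 - 2 * y 1 + y 2) + c 2 * (y 1 - 3 * y 2) := by
  rw [toQ_eq, bq_apply]
  simp [Fin.sum_univ_three, gram3]
  ring

lemma vec3_eq : vec3 = bE.equivFun.symm ![1/7, 2/7, 3/7] := by
  rw [vec3, toQ_eq, ← map_smul]
  congr 1
  funext i
  fin_cases i <;> norm_num

-- membership in the lattice in coordinates
lemma mem_latticeQ (c : Fin 3 → ℚ) (y : Fin 3 → ℤ)
    (h : bE.equivFun.symm c = toQ (Fin 3 → ℤ) y) : ∀ i, c i = (y i : ℚ) := by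
  rw [toQ_eq] at h
  intro i
  have := congrFun (bE.equivFun.symm.injective h) i
  exact this

lemma hv_mem : vec3 ∈ dualLattice bform3 := by
  intro y
  refine ⟨-(y 2), ?_⟩
  rw [vec3_eq, bq_toQ]
  norm_num [Matrix.cons_val]
  simp only [Matrix.cons_val_two, Matrix.tail_cons, Matrix.head_cons]
  ring

lemma gen_lemma (x : ℚ ⊗[ℤ] (Fin 3 → ℤ)) (hx : x ∈ dualLattice bform3) :
    ∃ n : ℤ, ∃ m : Fin 3 → ℤ, x = n • vec3 + toQ (Fin 3 → ℤ) m := by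
  set c : Fin 3 → ℚ := bE.equivFun x with hc
  have hxc : x = bE.equivFun.symm c := (bE.equivFun.symm_apply_apply x).symm
  obtain ⟨w0, hw0⟩ := hx (Pi.single 0 1)
  obtain ⟨w1, hw1⟩ := hx (Pi.single 1 1)
  obtain ⟨w2, hw2⟩ := hx (Pi.single 2 1)
  rw [hxc, bq_toQ] at hw0 hw1 hw2
  simp [Pi.single_apply] at hw0 hw1 hw2
  refine ⟨-(5 * w0 + 3 * w1 + w2), ![0, w0, 2 * w0 + w1], ?_⟩
  rw [hxc, vec3_eq, toQ_eq, ← Int.cast_smul_eq_zsmul ℚ, ← map_smul, ← map_add]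
  congr 1
  funext i
  simp only [Pi.add_apply, Pi.smul_apply, smul_eq_mul]
  fin_cases i <;>
    · norm_num
      push_cast
      linarith [hw0, hw1, hw2]

lemma smul_vec3_mem (n : ℤ) (h : (7:ℤ) ∣ n) :
    n • vec3 ∈ LinearMap.range (toQ (Fin 3 → ℤ)) := by
  obtain ⟨t, rfl⟩ := h
  refine ⟨t • ![1, 2, 3], ?_⟩
  rw [map_smul, vec3, ← Int.cast_smul_eq_zsmul ℚ (7 * t), ← Int.cast_smul_eq_zsmul ℚ t,
    smul_smul]
  congr 1
  push_cast
  ring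

lemma smul_vec3_not_mem (n : ℤ) (h : n • vec3 ∈ LinearMap.range (toQ (Fin 3 → ℤ))) :
    (7:ℤ) ∣ n := by
  obtain ⟨y, hy⟩ := h
  rw [vec3_eq, ← Int.cast_smul_eq_zsmul ℚ, ← map_smul] at hy
  have h0 := mem_latticeQ _ y hy.symm 0
  norm_num at h0
  have h7 : (n : ℚ) = 7 * (y 0 : ℚ) := by rw [← h0]; ring
  have : n = 7 * y 0 := by exact_mod_cast h7
  exact ⟨y 0, this⟩

lemma vbar_zero_iff (n : ℤ) :
    n • (Submodule.Quotient.mk (⟨vec3, hv_mem⟩ : dualLattice bform3) :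
      disc bform3) = 0 ↔ (7:ℤ) ∣ n := by
  rw [← Submodule.Quotient.mk_smul, Submodule.Quotient.mk_eq_zero, Submodule.mem_comap]
  constructor
  · exact fun h => smul_vec3_not_mem n h
  · exact fun h => smul_vec3_mem n h

lemma gen_disc (u : disc bform3) : ∃ n : ℤ,
    u = n • (Submodule.Quotient.mk (⟨vec3, hv_mem⟩ : dualLattice bform3)) := by
  obtain ⟨x', rfl⟩ := Submodule.Quotient.mk_surjective _ u
  obtain ⟨n, m, hnm⟩ := gen_lemma x'.1 x'.2
  refine ⟨n, ?_⟩
  rw [← Submodule.Quotient.mk_smul, Submodule.Quotient.eq]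
  refine ⟨m, ?_⟩
  simp only [Submodule.coe_subtype, AddSubgroupClass.coe_sub, SetLike.val_smul]
  rw [hnm]
  abel

theorem fake_plane_stmt10 :
    (∀ x : Fin 3 → ℤ, (∀ y : Fin 3 → ℤ, bform3 x y = 0) → x = 0) ∧
    ∃ hv : vec3 ∈ dualLattice bform3,
      bform3.baseChange ℚ vec3 vec3 = -3 / 7 ∧
      Nat.card (disc bform3) = 7 ∧
      ∀ u : disc bform3, ∃ n : ℤ,
        u = n • (Submodule.Quotient.mk (⟨vec3, hv⟩ : dualLattice bform3)) := by
  refine ⟨?_, hv_mem, ?_, ?_, gen_disc⟩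
  · intro x hx
    have h0 := hx (Pi.single 0 1)
    have h1 := hx (Pi.single 1 1)
    have h2 := hx (Pi.single 2 1)
    simp [bform3, Matrix.toLinearMap₂'_apply, Fin.sum_univ_three, gram3,
      Pi.single_apply] at h0 h1 h2
    have e0 : x 0 = 0 := by omega
    have e1 : x 1 = 0 := by omega
    have e2 : x 2 = 0 := by omega
    funext i
    fin_cases i <;> first | exact e0 | exact e1 | exact e2
  · rw [vec3_eq, bq_apply]
    norm_num [Fin.sum_univ_three, gram3, Matrix.cons_val]
    norm_num [Matrix.cons_val_two, Matrix.tail_cons, Matrix.head_cons, Matrix.vecHead]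
  · set vbar : disc bform3 :=
      Submodule.Quotient.mk (⟨vec3, hv_mem⟩ : dualLattice bform3) with hvbar
    have hbij : Function.Bijective (fun k : ZMod 7 => ((ZMod.val k : ℤ) • vbar)) := by
      constructor
      · intro a b hab
        simp only at hab
        have : ((ZMod.val a : ℤ) - (ZMod.val b : ℤ)) • vbar = 0 := by
          rw [sub_smul, hab, sub_self]
        have hd := (vbar_zero_iff _).mp this
        have ha := ZMod.val_lt a
        have hb := ZMod.val_lt b
        have : ZMod.val a = ZMod.val b := by omega
        exact ZMod.val_injective 7 this
      · intro u
        obtain ⟨n, hn⟩ := gen_disc u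
        refine ⟨(n : ZMod 7), ?_⟩
        simp only
        have hval : (ZMod.val ((n : ZMod 7)) : ℤ) = n % 7 := ZMod.val_intCast n
        rw [hn, hval]
        have : ((n % 7) - n) • vbar = 0 := (vbar_zero_iff _).mpr (by omega)
        rw [sub_smul] at this
        linear_combination (norm := abel) this
    rw [← Nat.card_eq_of_bijective _ hbij, Nat.card_zmod]
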